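/- Fix a finite set Val with v = |Val| ≥ 2, natural numbers ℓ < u with u ≥ 1, a finite set Z with |Z| = v^ℓ, and ε > 0. Let M : Val^u → Z → ℝ be a channel matrix satisfying ε-differential privacy with respect to the Hamming adjacency on Val^u. Then there exists a square channel matrix M' : Val^ℓ → Val^ℓ → ℝ such that: (i) M' i j ≤ exp(ε · (u − ℓ + hammingDist(i, h))) · M' h j for all i, h ∈ Val^ℓ and all j ∈ Val^ℓ; (ii) for every i ∈ Val^ℓ, M' i i equals the maximum entry of M'; (iii) ∑_{j ∈ Val^ℓ} max_{i ∈ Val^ℓ} M' i j = ∑_{z ∈ Z} max_{x ∈ Val^u} M x z (so under uniform input distributions M' has the same a posteriori min-entropy as M). -/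

import Mathlib

/-- The Hamming graph on `Fin u → Val`: two tuples are adjacent iff they differ in
exactly one coordinate, i.e. their Hamming distance is `1`. -/
def hammingGraph (u : ℕ) (Val : Type*) [DecidableEq Val] :
    SimpleGraph (Fin u → Val) where
  Adj x y := hammingDist x y = 1
  symm := by
    refine ⟨fun x y h => ?_⟩
    rwa [hammingDist_comm]
  loopless := by
    refine ⟨fun x h => ?_⟩
    simp [hammingDist_self] at h

open Finset

section DPAux
set_option linter.unusedSectionVars false
set_option maxHeartbeats 1000000
variable {Val : Type*} [Fintype Val] [DecidableEq Val]

lemma dp_aux_pow_hd {ℓ : ℕ} (q : ℝ) (s t : Fin ℓ → Val) :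
    q ^ hammingDist s t = ∏ i, (if s i = t i then (1:ℝ) else q) := by
  rw [show hammingDist s t = (Finset.univ.filter fun i => s i ≠ t i).card from rfl,
    Finset.prod_ite]
  simp

lemma dp_aux_sum_cons {n : ℕ} (f : (Fin (n+1) → Val) → ℝ) :
    ∑ x : Fin (n+1) → Val, f x = ∑ a : Val, ∑ t : Fin n → Val, f (Fin.cons a t) := by
  rw [← Equiv.sum_comp (Fin.consEquiv (fun _ : Fin (n+1) => Val)) f, Fintype.sum_prod_type]
  rfl

lemma dp_aux_hd_cons {n : ℕ} (q : ℝ) (a b : Val) (s t : Fin n → Val) :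
    q ^ hammingDist (Fin.cons a s : Fin (n+1) → Val) (Fin.cons b t)
      = (if a = b then (1:ℝ) else q) * q ^ hammingDist s t := by
  rw [dp_aux_pow_hd q (Fin.cons a s : Fin (n+1) → Val) (Fin.cons b t), dp_aux_pow_hd q s t,
    Fin.prod_univ_succ]
  simp

lemma dp_aux_sphere (q : ℝ) : ∀ (ℓ : ℕ) (s : Fin ℓ → Val),
    ∑ t : Fin ℓ → Val, q ^ hammingDist s t
      = (1 + ((Fintype.card Val : ℝ) - 1) * q) ^ ℓ := by
  intro ℓ
  induction ℓ with
  | zero =>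
    intro s
    haveI : Unique (Fin 0 → Val) := ⟨⟨fun i => i.elim0⟩, fun f => funext fun i => i.elim0⟩
    simp [Fintype.sum_unique, show (default : Fin 0 → Val) = s from Subsingleton.elim _ _,
      hammingDist_self]
  | succ n ih =>
    intro s
    have hs : s = Fin.cons (s 0) (Fin.tail s) := (Fin.cons_self_tail s).symm
    rw [dp_aux_sum_cons (fun t => q ^ hammingDist s t)]
    have h1 : ∀ (a : Val) (t : Fin n → Val),
        q ^ hammingDist s (Fin.cons a t)
          = (if s 0 = a then (1:ℝ) else q) * q ^ hammingDist (Fin.tail s) t := by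
      intro a t
      conv_lhs => rw [hs]
      exact dp_aux_hd_cons q (s 0) a (Fin.tail s) t
    have h2 : ∀ a : Val, ∑ t : Fin n → Val, q ^ hammingDist s (Fin.cons a t)
        = (if s 0 = a then (1:ℝ) else q) * (1 + ((Fintype.card Val : ℝ) - 1) * q) ^ n := by
      intro a
      rw [Finset.sum_congr rfl fun t _ => h1 a t, ← Finset.mul_sum, ih (Fin.tail s)]
    rw [Finset.sum_congr rfl fun a _ => h2 a, ← Finset.sum_mul]
    have h3 : (∑ a : Val, if s 0 = a then (1:ℝ) else q)
        = 1 + ((Fintype.card Val : ℝ) - 1) * q := by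
      have h4 : (∑ a : Val, if s 0 = a then (1:ℝ) else q)
          = ∑ a : Val, (q + if a = s 0 then 1 - q else 0) := by
        apply Finset.sum_congr rfl
        intro a _
        by_cases h : s 0 = a
        · simp [h]
        · simp [h, Ne.symm h]
      rw [h4, Finset.sum_add_distrib, Finset.sum_const,
        Finset.sum_ite_eq' Finset.univ (s 0) (fun _ => (1:ℝ) - q)]
      simp [Finset.card_univ]
      ring
    rw [h3, pow_succ]
    ring


lemma dp_aux_quad (q : ℝ) (hq0 : 0 ≤ q) (hq1 : q ≤ 1) (hcard : 1 ≤ Fintype.card Val) :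
    ∀ (ℓ : ℕ) (y : (Fin ℓ → Val) → ℝ),
      ((1 + ((Fintype.card Val : ℝ) - 1) * q) / (Fintype.card Val : ℝ)) ^ ℓ * (∑ t, y t) ^ 2
        ≤ ∑ s : Fin ℓ → Val, ∑ t : Fin ℓ → Val, q ^ hammingDist s t * (y s * y t) := by
  have hv1 : (1:ℝ) ≤ (Fintype.card Val : ℝ) := by exact_mod_cast hcard
  have hv0 : (0:ℝ) < (Fintype.card Val : ℝ) := by linarith
  intro ℓ
  induction ℓ with
  | zero =>
    intro y
    haveI : Unique (Fin 0 → Val) := ⟨⟨fun i => i.elim0⟩, fun f => funext fun i => i.elim0⟩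
    simp [Fintype.sum_unique, hammingDist_self]
    exact le_of_eq (by ring)
  | succ n ih =>
    intro y
    set v : ℝ := (Fintype.card Val : ℝ) with hv
    set c : ℝ := (1 + (v - 1) * q) / v with hc
    have hc0 : 0 ≤ c := by
      apply div_nonneg _ hv0.le
      nlinarith
    set B : Val → Val → ℝ := fun a b => ∑ s : Fin n → Val, ∑ t : Fin n → Val,
        q ^ hammingDist s t * (y (Fin.cons a s) * y (Fin.cons b t)) with hB
    set Y : (Fin n → Val) → ℝ := fun t => ∑ a : Val, y (Fin.cons a t) with hY
    set σ : Val → ℝ := fun a => ∑ t : Fin n → Val, y (Fin.cons a t) with hσ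
    -- step 1 : full decomposition
    have step1 : ∑ s : Fin (n+1) → Val, ∑ t : Fin (n+1) → Val,
          q ^ hammingDist s t * (y s * y t)
        = ∑ a : Val, ∑ b : Val, (if a = b then (1:ℝ) else q) * B a b := by
      rw [dp_aux_sum_cons (fun x => ∑ t : Fin (n+1) → Val, q ^ hammingDist x t * (y x * y t))]
      refine Finset.sum_congr rfl fun a _ => ?_
      have e1 : ∀ s : Fin n → Val, (∑ t : Fin (n+1) → Val,
          q ^ hammingDist (Fin.cons a s : Fin (n+1) → Val) t * (y (Fin.cons a s) * y t))
          = ∑ b : Val, ∑ t : Fin n → Val, (if a = b then (1:ℝ) else q)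
              * (q ^ hammingDist s t * (y (Fin.cons a s) * y (Fin.cons b t))) := by
        intro s
        rw [dp_aux_sum_cons (fun t => q ^ hammingDist (Fin.cons a s : Fin (n+1) → Val) t
          * (y (Fin.cons a s) * y t))]
        refine Finset.sum_congr rfl fun b _ => Finset.sum_congr rfl fun t _ => ?_
        rw [dp_aux_hd_cons q a b s t]
        ring
      rw [Finset.sum_congr rfl fun s _ => e1 s, Finset.sum_comm]
      refine Finset.sum_congr rfl fun b _ => ?_
      rw [hB]
      dsimp only
      rw [Finset.mul_sum]
      refine Finset.sum_congr rfl fun s _ => ?_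
      rw [Finset.mul_sum]
    -- step 2 : split diagonal
    have step2 : ∑ a : Val, ∑ b : Val, (if a = b then (1:ℝ) else q) * B a b
        = q * (∑ a : Val, ∑ b : Val, B a b) + (1 - q) * ∑ a : Val, B a a := by
      have e2 : ∀ a b : Val, (if a = b then (1:ℝ) else q) * B a b
          = q * B a b + (if a = b then (1 - q) * B a b else 0) := by
        intro a b
        by_cases h : a = b <;> simp [h] <;> ring
      rw [Finset.sum_congr rfl fun a _ => Finset.sum_congr rfl fun b _ => e2 a b]
      have e3 : ∀ a : Val, ∑ b : Val, (q * B a b + (if a = b then (1 - q) * B a b else 0))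
          = q * (∑ b : Val, B a b) + (1 - q) * B a a := by
        intro a
        rw [Finset.sum_add_distrib, ← Finset.mul_sum,
          Finset.sum_ite_eq Finset.univ a (fun b => (1 - q) * B a b)]
        simp
      rw [Finset.sum_congr rfl fun a _ => e3 a, Finset.sum_add_distrib, ← Finset.mul_sum,
        ← Finset.mul_sum]
    -- step 3 : bilinearity
    have step3 : ∑ a : Val, ∑ b : Val, B a b
        = ∑ s : Fin n → Val, ∑ t : Fin n → Val, q ^ hammingDist s t * (Y s * Y t) := by
      have h3 : ∀ a : Val, ∑ b : Val, B a b
          = ∑ s : Fin n → Val, ∑ t : Fin n → Val,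
              q ^ hammingDist s t * (y (Fin.cons a s) * Y t) := by
        intro a
        rw [hB]
        dsimp only
        rw [Finset.sum_comm]
        refine Finset.sum_congr rfl fun s _ => ?_
        rw [Finset.sum_comm]
        refine Finset.sum_congr rfl fun t _ => ?_
        simp only [hY, ← Finset.mul_sum]
      rw [Finset.sum_congr rfl fun a _ => h3 a, Finset.sum_comm]
      refine Finset.sum_congr rfl fun s _ => ?_
      rw [Finset.sum_comm]
      refine Finset.sum_congr rfl fun t _ => ?_
      simp only [hY, ← Finset.mul_sum, ← Finset.sum_mul]
    -- totals
    have tot : ∑ x : Fin (n+1) → Val, y x = ∑ a : Val, σ a := dp_aux_sum_cons y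
    have totY : ∑ t : Fin n → Val, Y t = ∑ a : Val, σ a := Finset.sum_comm
    -- induction applications
    have ihY := ih Y
    have ihA : ∀ a : Val, c ^ n * (σ a) ^ 2
        ≤ ∑ s : Fin n → Val, ∑ t : Fin n → Val,
            q ^ hammingDist s t * (y (Fin.cons a s) * y (Fin.cons a t)) := by
      intro a
      exact ih (fun t => y (Fin.cons a t))
    -- Cauchy-Schwarz on σ
    have hCS : (∑ a : Val, σ a) ^ 2 ≤ v * ∑ a : Val, (σ a) ^ 2 := by
      have := Finset.sum_mul_sq_le_sq_mul_sq Finset.univ σ (fun _ => (1:ℝ))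
      simp only [mul_one, one_pow, Finset.sum_const, Finset.card_univ, nsmul_eq_mul] at this
      calc (∑ a : Val, σ a) ^ 2 ≤ (∑ a : Val, (σ a) ^ 2) * ((Fintype.card Val : ℝ) * 1) := by
            simpa using this
        _ = v * ∑ a : Val, (σ a) ^ 2 := by rw [hv]; ring
    -- assemble
    rw [step1, step2, step3, tot]
    have hqY : q * (c ^ n * (∑ t, Y t) ^ 2)
        ≤ q * (∑ s : Fin n → Val, ∑ t : Fin n → Val, q ^ hammingDist s t * (Y s * Y t)) :=
      mul_le_mul_of_nonneg_left ihY hq0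
    have hdiag : (1 - q) * (c ^ n * ∑ a : Val, (σ a) ^ 2) ≤ (1 - q) * ∑ a : Val, B a a := by
      apply mul_le_mul_of_nonneg_left _ (by linarith)
      rw [Finset.mul_sum]
      exact Finset.sum_le_sum fun a _ => ihA a
    rw [totY] at hqY
    have hfin : c ^ (n + 1) * (∑ a : Val, σ a) ^ 2
        ≤ q * (c ^ n * (∑ a : Val, σ a) ^ 2) + (1 - q) * (c ^ n * ∑ a : Val, (σ a) ^ 2) := by
      have hcn : (0:ℝ) ≤ c ^ n := pow_nonneg hc0 n
      have e5 : c = q + (1 - q) / v := by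
        rw [hc]
        field_simp
        ring
      have expand : c ^ (n+1) * (∑ a : Val, σ a) ^ 2
          = q * (c ^ n * (∑ a : Val, σ a) ^ 2)
            + (1 - q) * (c ^ n * ((∑ a : Val, σ a) ^ 2 / v)) := by
        rw [pow_succ, e5]
        ring
      rw [expand]
      have h5 : (∑ a : Val, σ a) ^ 2 / v ≤ ∑ a : Val, (σ a) ^ 2 := by
        rw [div_le_iff₀ hv0]
        calc (∑ a : Val, σ a) ^ 2 ≤ v * ∑ a : Val, (σ a) ^ 2 := hCS
          _ = (∑ a : Val, (σ a) ^ 2) * v := by ring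
      have h6 : (1 - q) * (c ^ n * ((∑ a : Val, σ a) ^ 2 / v))
          ≤ (1 - q) * (c ^ n * ∑ a : Val, (σ a) ^ 2) := by
        apply mul_le_mul_of_nonneg_left _ (by linarith : (0:ℝ) ≤ 1 - q)
        exact mul_le_mul_of_nonneg_left h5 hcn
      linarith
    linarith [hqY, hdiag, hfin]

lemma dp_aux_chain {u : ℕ} {Z : Type*} (ε : ℝ) (hε : 0 ≤ ε)
    (M : (Fin u → Val) → Z → ℝ) (hnn : ∀ x z, 0 ≤ M x z)
    (hdp : ∀ x x' : Fin u → Val, hammingDist x x' = 1 → ∀ z, M x z ≤ Real.exp ε * M x' z) :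
    ∀ (n : ℕ) (x y : Fin u → Val) (z : Z), hammingDist x y ≤ n →
      M x z ≤ Real.exp (ε * n) * M y z := by
  intro n
  induction n with
  | zero =>
    intro x y z h
    have hxy : x = y := hammingDist_eq_zero.mp (Nat.le_zero.mp h)
    subst hxy
    simp
  | succ n ih =>
    intro x y z h
    rw [show ((n+1 : ℕ) : ℝ) = (n : ℝ) + 1 by push_cast; ring]
    by_cases hxy : hammingDist x y = 0
    · have hxy' : x = y := hammingDist_eq_zero.mp hxy
      subst hxy'
      have h1 : (1:ℝ) ≤ Real.exp (ε * (n+1)) := by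
        apply Real.one_le_exp
        positivity
      nlinarith [hnn x z]
    · have hne : x ≠ y := fun hh => hxy (by rw [hh, hammingDist_self])
      obtain ⟨k, hk⟩ : ∃ k, x k ≠ y k := by
        by_contra hc
        push_neg at hc
        exact hne (funext hc)
    -- y' = x updated at k
      set y' : Fin u → Val := Function.update x k (y k) with hy'
      have hmem : k ∈ Finset.univ.filter fun i => x i ≠ y i := by
        simp [hk]
      have h1 : hammingDist x y' = 1 := by
        rw [show hammingDist x y' = (Finset.univ.filter fun i => x i ≠ y' i).card from rfl]
        rw [show (Finset.univ.filter fun i => x i ≠ y' i) = {k} from ?_]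
        · exact Finset.card_singleton k
        · ext i
          simp only [Finset.mem_filter, Finset.mem_univ, true_and, Finset.mem_singleton, hy',
            Function.update_apply]
          constructor
          · intro hi
            by_contra hik
            simp [hik] at hi
          · intro hik
            subst hik
            simp [hk]
      have h2 : hammingDist y' y ≤ n := by
        have hset : (Finset.univ.filter fun i => y' i ≠ y i)
            = (Finset.univ.filter fun i => x i ≠ y i).erase k := by
          ext i
          simp only [Finset.mem_filter, Finset.mem_univ, true_and, Finset.mem_erase, hy',
            Function.update_apply]
          by_cases hik : i = k
          · subst hik
            simp
          · simp [hik]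
        have hcard : hammingDist y' y = hammingDist x y - 1 := by
          rw [show hammingDist y' y = (Finset.univ.filter fun i => y' i ≠ y i).card from rfl,
            hset, Finset.card_erase_of_mem hmem]
          rfl
        omega
      calc M x z ≤ Real.exp ε * M y' z := hdp x y' h1 z
        _ ≤ Real.exp ε * (Real.exp (ε * n) * M y z) := by
            have := ih y' y z h2
            exact mul_le_mul_of_nonneg_left this (Real.exp_pos ε).le
        _ = Real.exp (ε * ((n : ℝ)+1)) * M y z := by
            rw [← mul_assoc, ← Real.exp_add]
            ring_nf

lemma dp_aux_head {u ℓ : ℕ} (hℓu : ℓ ≤ u) (hl : 0 < ℓ) (x y : Fin u → Val) :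
    hammingDist x y ≤ (u - ℓ) + hammingDist (fun i : Fin ℓ => x (Fin.castLE hℓu i))
      (fun i : Fin ℓ => y (Fin.castLE hℓu i)) := by
  classical
  set A : Finset (Fin u) := Finset.univ.filter (fun k : Fin u => (k:ℕ) < ℓ ∧ x k ≠ y k) with hA
  set Bs : Finset (Fin u) := Finset.univ.filter (fun k : Fin u => ¬ (k:ℕ) < ℓ) with hBs
  have hsub : (Finset.univ.filter fun k : Fin u => x k ≠ y k) ⊆ A ∪ Bs := by
    intro k hkmem
    simp only [Finset.mem_filter, Finset.mem_univ, true_and] at hkmem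
    simp only [hA, hBs, Finset.mem_union, Finset.mem_filter, Finset.mem_univ, true_and]
    by_cases hk : (k:ℕ) < ℓ
    · exact Or.inl ⟨hk, hkmem⟩
    · exact Or.inr hk
  have hcardB : Bs.card ≤ u - ℓ := by
    have h1 : (Finset.univ.filter fun k : Fin u => (k:ℕ) < ℓ).card
        + (Finset.univ.filter fun k : Fin u => ¬ (k:ℕ) < ℓ).card = Fintype.card (Fin u) :=
      (Finset.card_filter_add_card_filter_not _).trans (by simp)
    have h2 : (Finset.univ : Finset (Fin ℓ)).card
        ≤ (Finset.univ.filter fun k : Fin u => (k:ℕ) < ℓ).card := by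
      apply Finset.card_le_card_of_injOn (fun i : Fin ℓ => Fin.castLE hℓu i)
      · intro i _
        simp only [Finset.mem_coe, Finset.mem_filter, Finset.mem_univ, true_and]
        exact i.isLt
      · intro i _ j _ hij
        have h' := congrArg Fin.val hij
        simp only [Fin.coe_castLE] at h'
        exact Fin.ext h'
    rw [Fintype.card_fin] at h1
    rw [← hBs] at h1
    simp only [Finset.card_univ, Fintype.card_fin] at h2
    omega
  have hcardA : A.card ≤ hammingDist (fun i : Fin ℓ => x (Fin.castLE hℓu i))
      (fun i : Fin ℓ => y (Fin.castLE hℓu i)) := by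
    rw [show hammingDist (fun i : Fin ℓ => x (Fin.castLE hℓu i))
        (fun i : Fin ℓ => y (Fin.castLE hℓu i))
        = (Finset.univ.filter fun i : Fin ℓ =>
            x (Fin.castLE hℓu i) ≠ y (Fin.castLE hℓu i)).card from rfl]
    apply Finset.card_le_card_of_injOn (fun k : Fin u => (⟨(k:ℕ) % ℓ, Nat.mod_lt _ hl⟩ : Fin ℓ))
    · intro k hkmem
      simp only [Finset.mem_coe, hA, Finset.mem_filter, Finset.mem_univ, true_and] at hkmem
      obtain ⟨hkl, hkne⟩ := hkmem
      have hmod : (k:ℕ) % ℓ = (k:ℕ) := Nat.mod_eq_of_lt hkl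
      have hcast : Fin.castLE hℓu (⟨(k:ℕ) % ℓ, Nat.mod_lt _ hl⟩ : Fin ℓ) = k := by
        apply Fin.ext
        simp [hmod]
      simp only [Finset.mem_coe, Finset.mem_filter, Finset.mem_univ, true_and, hcast]
      exact hkne
    · intro k₁ h₁ k₂ h₂ hk
      simp only [Finset.mem_coe, hA, Finset.mem_filter, Finset.mem_univ, true_and] at h₁ h₂
      have e1 : (k₁:ℕ) % ℓ = (k₂:ℕ) % ℓ := congrArg Fin.val hk
      rw [Nat.mod_eq_of_lt h₁.1, Nat.mod_eq_of_lt h₂.1] at e1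
      exact Fin.ext e1
  calc hammingDist x y = (Finset.univ.filter fun k : Fin u => x k ≠ y k).card := rfl
    _ ≤ (A ∪ Bs).card := Finset.card_le_card hsub
    _ ≤ A.card + Bs.card := Finset.card_union_le _ _
    _ ≤ (u - ℓ) + hammingDist (fun i : Fin ℓ => x (Fin.castLE hℓu i))
        (fun i : Fin ℓ => y (Fin.castLE hℓu i)) := by omega
end DPAux


set_option maxHeartbeats 1600000

/-- Let `M` be a channel matrix on `Val^u × Z` with `|Z| = v^ℓ`,
`ℓ < u`, satisfying `ε`-differential privacy with respect to the Hamming adjacency on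
`Val^u`. Then there is a square channel matrix `M'` on `Val^ℓ × Val^ℓ` such that
(i) `M' i j ≤ exp (ε (u - ℓ + hammingDist i h)) * M' h j` for all `i, h, j`;
(ii) every diagonal entry `M' i i` equals the maximum entry of `M'`; and
(iii) `∑_j max_i M' i j = ∑_z max_x M x z`, so under uniform input distributions `M'`
has the same a posteriori min-entropy as `M`. -/
theorem dp_restricted_range_transform
    (Val : Type*) [Fintype Val] [DecidableEq Val]
    (hv : 2 ≤ Fintype.card Val) (ℓ u : ℕ) (hℓu : ℓ < u) (hu : 1 ≤ u)
    {Z : Type*} [Fintype Z] (hZ : Fintype.card Z = Fintype.card Val ^ ℓ)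
    (ε : ℝ) (hε : 0 < ε) (M : (Fin u → Val) → Z → ℝ)
    (hnn : ∀ x z, 0 ≤ M x z) (hrow : ∀ x, ∑ z, M x z = 1)
    (hdp : ∀ x x', (hammingGraph u Val).Adj x x' → ∀ z, M x z ≤ Real.exp ε * M x' z) :
    ∃ M' : (Fin ℓ → Val) → (Fin ℓ → Val) → ℝ,
      (∀ i j, 0 ≤ M' i j) ∧
      (∀ i, ∑ j, M' i j = 1) ∧
      (∀ i h j : Fin ℓ → Val,
        M' i j ≤ Real.exp (ε * ((u - ℓ : ℕ) + (hammingDist i h : ℝ))) * M' h j) ∧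
      (∀ i h j : Fin ℓ → Val, M' h j ≤ M' i i) ∧
      (∑ j, ⨆ i, M' i j) = (∑ z, ⨆ x, M x z) := by
  classical
  have hVpos : 0 < Fintype.card Val := by omega
  have hVne : Nonempty Val := Fintype.card_pos_iff.mp hVpos
  obtain ⟨v0⟩ := hVne
  haveI hXne : Nonempty (Fin u → Val) := ⟨fun _ => v0⟩
  set q : ℝ := Real.exp (-ε) with hqdef
  have hq0 : 0 < q := Real.exp_pos _
  have hq1 : q < 1 := by
    rw [hqdef]
    calc Real.exp (-ε) < Real.exp 0 := Real.exp_lt_exp.mpr (by linarith)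
      _ = 1 := Real.exp_zero
  have hqn : ∀ n : ℕ, q ^ n = Real.exp (-(ε * n)) := by
    intro n
    rw [hqdef, ← Real.exp_nat_mul]
    ring_nf
  set v : ℝ := (Fintype.card Val : ℝ) with hvdef
  have hv2 : (2:ℝ) ≤ v := by
    rw [hvdef]
    exact_mod_cast hv
  -- column maxima
  have hZpos : 0 < Fintype.card Z := by
    rw [hZ]
    exact pow_pos hVpos ℓ
  haveI hZne : Nonempty Z := Fintype.card_pos_iff.mp hZpos
  choose xs hxs using fun z : Z => Finite.exists_max (fun x : Fin u → Val => M x z)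
  set m : Z → ℝ := fun z => ⨆ x, M x z with hmdef
  have hm_eq : ∀ z, m z = M (xs z) z := by
    intro z
    simp only [hmdef]
    exact le_antisymm (ciSup_le (hxs z))
      (le_ciSup (f := fun x => M x z) (Set.finite_range _).bddAbove (xs z))
  have hm_ge : ∀ z x, M x z ≤ m z := by
    intro z x
    rw [hm_eq]
    exact hxs z x
  have hm0 : ∀ z, 0 ≤ m z := fun z => le_trans (hnn (fun _ => v0) z) (hm_ge z _)
  set S : ℝ := ∑ z, m z with hSdef
  have hS1 : 1 ≤ S := by
    rw [hSdef, ← hrow (fun _ => v0)]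
    exact Finset.sum_le_sum fun z _ => hm_ge z _
  -- chain bound, multiplicative form
  have chainq : ∀ (x : Fin u → Val) (z : Z), m z * q ^ (hammingDist x (xs z)) ≤ M x z := by
    intro x z
    have h1 : M (xs z) z ≤ Real.exp (ε * (hammingDist (xs z) x)) * M x z :=
      dp_aux_chain ε hε.le M hnn (fun a b hab z' => hdp a b hab z')
        (hammingDist (xs z) x) (xs z) x z le_rfl
    rw [hammingDist_comm (xs z) x] at h1
    rw [hm_eq z]
    calc M (xs z) z * q ^ (hammingDist x (xs z))
        ≤ (Real.exp (ε * (hammingDist x (xs z))) * M x z) * q ^ (hammingDist x (xs z)) :=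
          mul_le_mul_of_nonneg_right h1 (pow_nonneg hq0.le _)
      _ = M x z := by
          rw [hqn, mul_right_comm, ← Real.exp_add]
          simp
  by_cases hl0 : ℓ = 0
  · -- degenerate case ℓ = 0
    subst hl0
    haveI hU : Unique (Fin 0 → Val) := ⟨⟨fun i => i.elim0⟩, fun f => funext fun i => i.elim0⟩
    have hZ1 : Fintype.card Z = 1 := by
      rw [hZ]
      exact pow_zero _
    haveI : Subsingleton Z := Fintype.card_le_one_iff_subsingleton.mp (le_of_eq hZ1)
    have hMone : ∀ x z, M x z = 1 := by
      intro x z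
      have h1 := hrow x
      rw [show (Finset.univ : Finset Z) = {z} from
        Finset.eq_singleton_iff_unique_mem.mpr
          ⟨Finset.mem_univ z, fun y _ => Subsingleton.elim y z⟩, Finset.sum_singleton] at h1
      exact h1
    refine ⟨fun _ _ => 1, fun i j => zero_le_one, ?_, ?_, fun i h j => le_refl _, ?_⟩
    · intro i
      rw [Finset.sum_const, Finset.card_univ]
      simp
    · intro i h j
      have h1 : (1:ℝ) ≤ Real.exp (ε * ((u - 0 : ℕ) + (hammingDist i h : ℝ))) := by
        apply Real.one_le_exp
        have : (0:ℝ) ≤ ((u - 0 : ℕ) : ℝ) + (hammingDist i h : ℝ) := by positivity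
        nlinarith [hε.le]
      dsimp only
      linarith
    · have hsupM : ∀ z, m z = 1 := by
        intro z
        have hconst : (fun x : Fin u → Val => M x z) = (fun _ => (1:ℝ)) :=
          funext fun x => hMone x z
        calc m z = iSup (fun x : Fin u → Val => M x z) := by simp only [hmdef]
          _ = iSup (fun _ : Fin u → Val => (1:ℝ)) := by rw [hconst]
          _ = 1 := ciSup_const
      have hL : (∑ j : Fin 0 → Val, ⨆ i : Fin 0 → Val, (1:ℝ)) = 1 := by
        rw [Finset.sum_congr rfl fun j _ => ciSup_const, Finset.sum_const, Finset.card_univ]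
        simp
      have hR : S = 1 := by
        rw [hSdef, Finset.sum_congr rfl fun z _ => hsupM z, Finset.sum_const,
          Finset.card_univ, hZ1]
        simp
      dsimp only
      rw [hL, hR]
  · -- main case ℓ ≥ 1
    have hlpos : 0 < ℓ := Nat.pos_of_ne_zero hl0
    haveI hLne : Nonempty (Fin ℓ → Val) := ⟨fun _ => v0⟩
    set c' : ℕ := u - ℓ with hc'
    set T : ℝ := (1 + (v - 1) * q) ^ ℓ with hT
    set Nr : ℝ := v ^ ℓ with hNr
    have hqc1 : q ^ c' ≤ 1 := pow_le_one₀ hq0.le hq1.le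
    have hqc0 : 0 < q ^ c' := pow_pos hq0 c'
    have hbase1 : (1:ℝ) ≤ 1 + (v - 1) * q := by nlinarith
    have hT1 : 1 ≤ T := one_le_pow₀ hbase1
    have hTN : T < Nr := by
      rw [hT, hNr]
      exact pow_lt_pow_left₀ (by nlinarith) (by nlinarith) hl0
    set G : ℝ := 1 + q ^ c' * (T - 1) with hG
    have hG1 : 1 ≤ G := by nlinarith
    have hGT : G ≤ T := by nlinarith
    have hGN : G < Nr := lt_of_le_of_lt hGT hTN
    have hNr0 : (0:ℝ) < Nr := by
      rw [hNr]
      positivity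
    -- heads
    set H : Z → (Fin ℓ → Val) := fun z => fun i => xs z (Fin.castLE hℓu.le i) with hH
    have hhead : ∀ z z' : Z,
        hammingDist (xs z) (xs z') ≤ c' + hammingDist (H z) (H z') :=
      fun z z' => dp_aux_head hℓu.le hlpos (xs z) (xs z')
    -- per-column inequality
    have keyz : ∀ z : Z,
        (1 - q ^ c') * m z + q ^ c' * (∑ z', q ^ (hammingDist (H z) (H z')) * m z') ≤ 1 := by
      intro z
      have hub : ∀ z' : Z, (if z' = z then (1 - q ^ c') * m z else 0)
          + q ^ c' * (q ^ (hammingDist (H z) (H z')) * m z') ≤ M (xs z) z' := by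
        intro z'
        by_cases hzz : z' = z
        · subst hzz
          simp only [eq_self_iff_true, if_true, hammingDist_self, pow_zero, one_mul]
          rw [← hm_eq z']
          have he : (1 - q ^ c') * m z' + q ^ c' * m z' = m z' := by ring
          linarith
        · rw [if_neg hzz, zero_add]
          calc q ^ c' * (q ^ (hammingDist (H z) (H z')) * m z')
              = q ^ (c' + hammingDist (H z) (H z')) * m z' := by
                rw [pow_add]
                ring
            _ ≤ q ^ (hammingDist (xs z) (xs z')) * m z' :=
                mul_le_mul_of_nonneg_right
                  (pow_le_pow_of_le_one hq0.le hq1.le (hhead z z')) (hm0 z')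
            _ ≤ M (xs z) z' := by
                rw [mul_comm]
                exact chainq (xs z) z'
      calc (1 - q ^ c') * m z + q ^ c' * (∑ z', q ^ (hammingDist (H z) (H z')) * m z')
          = ∑ z', ((if z' = z then (1 - q ^ c') * m z else 0)
              + q ^ c' * (q ^ (hammingDist (H z) (H z')) * m z')) := by
            rw [Finset.sum_add_distrib, Finset.sum_ite_eq' Finset.univ z
              (fun _ => (1 - q ^ c') * m z), ← Finset.mul_sum]
            simp
        _ ≤ ∑ z', M (xs z) z' := Finset.sum_le_sum fun z' _ => hub z'
        _ = 1 := hrow (xs z)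
    -- multiply by m z and sum
    have key2 : (1 - q ^ c') * (∑ z, m z ^ 2)
        + q ^ c' * (∑ z, ∑ z', q ^ (hammingDist (H z) (H z')) * (m z * m z')) ≤ S := by
      have h1 : ∀ z, (1 - q ^ c') * m z ^ 2
          + q ^ c' * (∑ z', q ^ (hammingDist (H z) (H z')) * (m z * m z')) ≤ m z := by
        intro z
        have h2 := mul_le_mul_of_nonneg_left (keyz z) (hm0 z)
        calc (1 - q ^ c') * m z ^ 2
            + q ^ c' * (∑ z', q ^ (hammingDist (H z) (H z')) * (m z * m z'))
            = m z * ((1 - q ^ c') * m z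
              + q ^ c' * (∑ z', q ^ (hammingDist (H z) (H z')) * m z')) := by
              rw [mul_add, Finset.mul_sum, Finset.mul_sum, Finset.mul_sum]
              congr 1
              · ring
              · exact Finset.sum_congr rfl fun z' _ => by ring
          _ ≤ m z * 1 := h2
          _ = m z := mul_one _
      calc (1 - q ^ c') * (∑ z, m z ^ 2)
          + q ^ c' * (∑ z, ∑ z', q ^ (hammingDist (H z) (H z')) * (m z * m z'))
          = ∑ z, ((1 - q ^ c') * m z ^ 2
            + q ^ c' * (∑ z', q ^ (hammingDist (H z) (H z')) * (m z * m z'))) := by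
            rw [Finset.sum_add_distrib, ← Finset.mul_sum, ← Finset.mul_sum]
        _ ≤ ∑ z, m z := Finset.sum_le_sum fun z _ => h1 z
        _ = S := hSdef.symm
    -- regroup by heads
    set Mt : (Fin ℓ → Val) → ℝ :=
      fun t => ∑ z ∈ Finset.univ.filter (fun z => H z = t), m z with hMt
    have fib : ∀ g : (Fin ℓ → Val) → ℝ, ∑ t, g t * Mt t = ∑ z, g (H z) * m z := by
      intro g
      rw [← Finset.sum_fiberwise_of_maps_to (fun z _ => Finset.mem_univ (H z))
        (fun z => g (H z) * m z)]
      refine Finset.sum_congr rfl fun t _ => ?_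
      rw [hMt]
      dsimp only
      rw [Finset.mul_sum]
      refine Finset.sum_congr rfl fun z hz => ?_
      rw [(Finset.mem_filter.mp hz).2]
    have fib1 : ∑ t, Mt t = S := by
      have h := fib (fun _ => 1)
      simpa [hSdef] using h
    have regroup : ∑ s, ∑ t, q ^ hammingDist s t * (Mt s * Mt t)
        = ∑ z, ∑ z', q ^ (hammingDist (H z) (H z')) * (m z * m z') := by
      have hin : ∀ s : Fin ℓ → Val, ∑ t, q ^ hammingDist s t * (Mt s * Mt t)
          = Mt s * ∑ z', q ^ (hammingDist s (H z')) * m z' := by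
        intro s
        have := fib (fun t => q ^ hammingDist s t * Mt s)
        calc ∑ t, q ^ hammingDist s t * (Mt s * Mt t)
            = ∑ t, (q ^ hammingDist s t * Mt s) * Mt t := by
              refine Finset.sum_congr rfl fun t _ => by ring
          _ = ∑ z', (q ^ (hammingDist s (H z')) * Mt s) * m z' := this
          _ = Mt s * ∑ z', q ^ (hammingDist s (H z')) * m z' := by
              rw [Finset.mul_sum]
              refine Finset.sum_congr rfl fun z' _ => by ring
      rw [Finset.sum_congr rfl fun s _ => hin s]
      have hout := fib (fun s => ∑ z', q ^ (hammingDist s (H z')) * m z')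
      calc ∑ s, Mt s * ∑ z', q ^ (hammingDist s (H z')) * m z'
          = ∑ s, (∑ z', q ^ (hammingDist s (H z')) * m z') * Mt s := by
            refine Finset.sum_congr rfl fun s _ => by ring
        _ = ∑ z, (∑ z', q ^ (hammingDist (H z) (H z')) * m z') * m z := hout
        _ = ∑ z, ∑ z', q ^ (hammingDist (H z) (H z')) * (m z * m z') := by
            refine Finset.sum_congr rfl fun z _ => ?_
            rw [Finset.sum_mul]
            refine Finset.sum_congr rfl fun z' _ => by ring
    -- quadratic bound
    have hquad := dp_aux_quad q hq0.le hq1.le (by omega) ℓ Mt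
    rw [fib1] at hquad
    have hcpow : ((1 + ((Fintype.card Val : ℝ) - 1) * q) / (Fintype.card Val : ℝ)) ^ ℓ
        = T / Nr := by
      rw [hT, hNr, hvdef, div_pow]
    rw [hcpow, regroup] at hquad
    -- Cauchy-Schwarz
    have hcardZ : ((Fintype.card Z : ℕ) : ℝ) = Nr := by
      rw [hZ, hNr, hvdef]
      push_cast
      ring
    have hCS : S ^ 2 ≤ Nr * ∑ z, m z ^ 2 := by
      have h := Finset.sum_mul_sq_le_sq_mul_sq Finset.univ m (fun _ => (1:ℝ))
      simp only [mul_one, one_pow, Finset.sum_const, Finset.card_univ, nsmul_eq_mul] at h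
      calc S ^ 2 = (∑ z, m z) ^ 2 := by rw [hSdef]
        _ ≤ (∑ z, m z ^ 2) * ((Fintype.card Z : ℕ) : ℝ) := by simpa using h
        _ = Nr * ∑ z, m z ^ 2 := by rw [hcardZ]; ring
    -- the key bound : G * S ≤ Nr
    have key : G * S ≤ Nr := by
      have h3 : (1 - q ^ c') * (S ^ 2 / Nr) ≤ (1 - q ^ c') * (∑ z, m z ^ 2) := by
        apply mul_le_mul_of_nonneg_left _ (by linarith)
        rw [div_le_iff₀ hNr0]
        nlinarith [hCS]
      have h4 : q ^ c' * (T / Nr * S ^ 2) ≤ q ^ c'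
          * (∑ z, ∑ z', q ^ (hammingDist (H z) (H z')) * (m z * m z')) :=
        mul_le_mul_of_nonneg_left hquad hqc0.le
      have h5 : G * S ^ 2 / Nr ≤ S := by
        have e : G * S ^ 2 / Nr
            = (1 - q ^ c') * (S ^ 2 / Nr) + q ^ c' * (T / Nr * S ^ 2) := by
          rw [hG]
          field_simp
          ring
        rw [e]
        linarith [key2, h3, h4]
      have hS0 : (0:ℝ) < S := by linarith
      have h6 : G * S ^ 2 ≤ S * Nr := by
        rw [div_le_iff₀ hNr0] at h5
        linarith
      have h7 : (G * S) * S ≤ Nr * S := by nlinarith [h6]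
      exact le_of_mul_le_mul_right h7 hS0
    -- construction of M'
    set α : ℝ := (S - 1) / (Nr - G) with hα
    set β : ℝ := (Nr - S * G) / (Nr * (Nr - G)) with hβ
    have hNG : (0:ℝ) < Nr - G := by linarith
    have hα0 : 0 ≤ α := div_nonneg (by linarith) hNG.le
    have hβ0 : 0 ≤ β := div_nonneg (by nlinarith [key]) (by positivity)
    set w : (Fin ℓ → Val) → (Fin ℓ → Val) → ℕ :=
      fun i j => (if i = j then 0 else c') + hammingDist i j with hwdef
    have hwii : ∀ i, w i i = 0 := by
      intro i
      simp [hwdef, hammingDist_self]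
    set M' : (Fin ℓ → Val) → (Fin ℓ → Val) → ℝ := fun i j => α * q ^ (w i j) + β with hM'
    have hM'nn : ∀ i j, 0 ≤ M' i j := fun i j =>
      add_nonneg (mul_nonneg hα0 (pow_nonneg hq0.le _)) hβ0
    have hdiagmax : ∀ i h j, M' h j ≤ M' i i := by
      intro i h j
      rw [hM']
      dsimp only
      rw [hwii i, pow_zero, mul_one]
      have h1 : q ^ (w h j) ≤ 1 := pow_le_one₀ hq0.le hq1.le
      nlinarith [mul_le_mul_of_nonneg_left h1 hα0]
    have hNcard : ((Fintype.card (Fin ℓ → Val) : ℕ) : ℝ) = Nr := by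
      rw [Fintype.card_fun, Fintype.card_fin, hNr, hvdef]
      push_cast
      ring
    have hrowsum : ∀ i, ∑ j, M' i j = 1 := by
      intro i
      have hsum_w : ∑ j, q ^ (w i j) = G := by
        rw [← Finset.add_sum_erase Finset.univ (fun j => q ^ (w i j)) (Finset.mem_univ i)]
        rw [hwii i, pow_zero]
        have he : ∀ j ∈ Finset.univ.erase i, q ^ (w i j) = q ^ c' * q ^ (hammingDist i j) := by
          intro j hj
          have hne : i ≠ j := (Finset.ne_of_mem_erase hj).symm
          rw [hwdef]
          dsimp only
          rw [if_neg hne, pow_add]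
        rw [Finset.sum_congr rfl he, ← Finset.mul_sum]
        have he2 : ∑ j ∈ Finset.univ.erase i, q ^ (hammingDist i j) = T - 1 := by
          have hsp := dp_aux_sphere q ℓ i
          have hsplit2 := Finset.add_sum_erase Finset.univ
            (fun j => q ^ (hammingDist i j)) (Finset.mem_univ i)
          beta_reduce at hsplit2
          rw [hammingDist_self, pow_zero] at hsplit2
          rw [hT, hvdef]
          linarith [hsp, hsplit2]
        rw [he2, hG]
      rw [hM']
      dsimp only
      rw [Finset.sum_add_distrib, ← Finset.mul_sum, hsum_w, Finset.sum_const,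
        Finset.card_univ, nsmul_eq_mul, hNcard]
      have hne1 : Nr - G ≠ 0 := ne_of_gt hNG
      have hne2 : Nr ≠ 0 := ne_of_gt hNr0
      rw [hα, hβ]
      field_simp
      ring
    have hDP' : ∀ i h j : Fin ℓ → Val,
        M' i j ≤ Real.exp (ε * ((u - ℓ : ℕ) + (hammingDist i h : ℝ))) * M' h j := by
      intro i h j
      set E : ℝ := Real.exp (ε * ((u - ℓ : ℕ) + (hammingDist i h : ℝ))) with hE
      have hE1 : (1:ℝ) ≤ E := by
        rw [hE]
        apply Real.one_le_exp
        have hc0' : (0:ℝ) ≤ ((u - ℓ : ℕ) : ℝ) + (hammingDist i h : ℝ) := by positivity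
        nlinarith [hε.le]
      have hEq : E * q ^ (c' + hammingDist i h) = 1 := by
        rw [hE, hqn (c' + hammingDist i h), ← Real.exp_add,
          show ε * (((u - ℓ : ℕ) : ℝ) + (hammingDist i h : ℝ))
            + -(ε * (((c' + hammingDist i h : ℕ) : ℝ))) = 0 from by push_cast [hc']; ring,
          Real.exp_zero]
      have hnat : w h j ≤ (c' + hammingDist i h) + w i j := by
        have t1 := hammingDist_triangle h i j
        have t2 : hammingDist h i = hammingDist i h := hammingDist_comm h i
        rw [hwdef]
        dsimp only
        split_ifs <;> omega
      have hpow : q ^ (w i j) * q ^ (c' + hammingDist i h) ≤ q ^ (w h j) := by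
        rw [← pow_add]
        exact pow_le_pow_of_le_one hq0.le hq1.le (by omega)
      have hmid : q ^ (c' + hammingDist i h) * M' i j ≤ M' h j := by
        rw [hM']
        dsimp only
        have hb : q ^ (c' + hammingDist i h) * β ≤ β := by
          nlinarith [hβ0, pow_le_one₀ hq0.le hq1.le (a := q) (n := c' + hammingDist i h)]
        have ha : q ^ (c' + hammingDist i h) * (α * q ^ (w i j)) ≤ α * q ^ (w h j) := by
          nlinarith [mul_le_mul_of_nonneg_left hpow hα0]
        nlinarith [ha, hb]
      calc M' i j = E * (q ^ (c' + hammingDist i h) * M' i j) := by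
            rw [← mul_assoc, hEq, one_mul]
        _ ≤ E * M' h j := mul_le_mul_of_nonneg_left hmid (by linarith)
    refine ⟨M', hM'nn, hrowsum, hDP', hdiagmax, ?_⟩
    have hdiag : ∀ j : Fin ℓ → Val, M' j j = α + β := by
      intro j
      rw [hM']
      dsimp only
      rw [hwii j, pow_zero, mul_one]
    have hsup : ∀ j : Fin ℓ → Val, (⨆ i, M' i j) = α + β := by
      intro j
      apply le_antisymm
      · apply ciSup_le
        intro i
        rw [← hdiag j]
        exact hdiagmax j i j
      · rw [← hdiag j]
        exact le_ciSup (f := fun i => M' i j) (Set.finite_range _).bddAbove j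
    rw [Finset.sum_congr rfl fun j _ => hsup j, Finset.sum_const, Finset.card_univ,
      nsmul_eq_mul, hNcard]
    have hne1 : Nr - G ≠ 0 := ne_of_gt hNG
    have hne2 : Nr ≠ 0 := ne_of_gt hNr0
    rw [hα, hβ]
    field_simp
    ring
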